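/- Let E be a spectral sequence of abelian groups equipped with an operator κ̄ of bidegree (4,24), satisfying the standing hypotheses, and assume additionally that E_2^{s,t} = 0 whenever s < 0. Suppose that κ̄^6 x = 0 for every element x of every group E_{24}^{s,t}. Then E_{24}^{s,t} = 0 for all s ≥ 24 and all t; consequently all differentials d_r for r ≥ 24 vanish and the spectral sequence degenerates at the E_{24}-page (E_r^{s,t} ≅ E_{24}^{s,t} for all r ≥ 24). -/

import Mathlib

/-- A spectral sequence of abelian groups in cohomological Adams indexing:
pages `E r s t` (for `r ≥ 2`; lower pages are irrelevant), differentials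
`d r` of bidegree `(r, r - 1)` squaring to zero, and an identification of the
`(r+1)`-st page with the homology of the `r`-th page, encoded by the map
`pageMap` sending a `d r`-cycle to its class in `E (r+1)`, which is additive,
surjective, and kills exactly the `d r`-boundaries. -/
structure SpectralSequence (E : ℕ → ℤ → ℤ → Type)
    [∀ r s t, AddCommGroup (E r s t)] where
  d : ∀ (r : ℕ) (s t : ℤ), E r s t →+ E r (s + r) (t + r - 1)
  d_d : ∀ (r : ℕ) (s t : ℤ) (x : E r s t),
    d r (s + r) (t + r - 1) (d r s t x) = 0
  pageMap : ∀ (r : ℕ) (s t : ℤ) (x : E r s t), d r s t x = 0 → E (r + 1) s t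
  pageMap_add : ∀ (r : ℕ) (s t : ℤ) (x y : E r s t)
    (hx : d r s t x = 0) (hy : d r s t y = 0) (hxy : d r s t (x + y) = 0),
    pageMap r s t (x + y) hxy = pageMap r s t x hx + pageMap r s t y hy
  pageMap_surjective : ∀ (r : ℕ) (s t : ℤ) (y : E (r + 1) s t),
    ∃ (x : E r s t) (hx : d r s t x = 0), pageMap r s t x hx = y
  pageMap_eq_zero_iff : ∀ (r : ℕ) (s t : ℤ) (x : E r s t) (hx : d r s t x = 0),
    pageMap r s t x hx = 0 ↔
      ∃ (s' t' : ℤ) (h : s' + (r : ℤ) = s) (h' : t' + (r : ℤ) - 1 = t)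
        (w : E r s' t'),
        cast (congrArg₂ (E r) h h') (d r s' t' w) = x

/-- An operator `κ̄` of bidegree `(4, 24)` on a spectral sequence: a family of
group homomorphisms commuting with the differentials and compatible with the
identification of the `(r+1)`-st pages with the homology of the `r`-th pages. -/
structure KappaOp {E : ℕ → ℤ → ℤ → Type} [∀ r s t, AddCommGroup (E r s t)]
    (SS : SpectralSequence E) where
  κ : ∀ (r : ℕ) (s t : ℤ), E r s t →+ E r (s + 4) (t + 24)
  comm_d : ∀ (r : ℕ) (s t : ℤ) (x : E r s t),
    SS.d r (s + 4) (t + 24) (κ r s t x) =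
      cast (congrArg₂ (E r) (by ring) (by ring))
        (κ r (s + r) (t + r - 1) (SS.d r s t x))
  comm_pageMap : ∀ (r : ℕ) (s t : ℤ) (x : E r s t) (hx : SS.d r s t x = 0)
    (hκx : SS.d r (s + 4) (t + 24) (κ r s t x) = 0),
    κ (r + 1) s t (SS.pageMap r s t x hx) =
      SS.pageMap r (s + 4) (t + 24) (κ r s t x) hκx

/-- Iterates `κ̄ ^ n` of the operator `κ̄`. -/
def KappaOp.iter {E : ℕ → ℤ → ℤ → Type} [∀ r s t, AddCommGroup (E r s t)]
    {SS : SpectralSequence E} (K : KappaOp SS) (r : ℕ) (s t : ℤ) :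
    (n : ℕ) → E r s t → E r (s + 4 * n) (t + 24 * n)
  | 0, x => cast (congrArg₂ (E r) (by push_cast; ring) (by push_cast; ring)) x
  | n + 1, x =>
      cast (congrArg₂ (E r) (by push_cast; ring) (by push_cast; ring))
        (K.κ r (s + 4 * n) (t + 24 * n) (K.iter r s t n x))

/-- `x` is `κ̄`-free if `κ̄ ^ n • x ≠ 0` for all `n ≥ 0`. -/
def KappaOp.KappaFree {E : ℕ → ℤ → ℤ → Type} [∀ r s t, AddCommGroup (E r s t)]
    {SS : SpectralSequence E} (K : KappaOp SS) (r : ℕ) (s t : ℤ)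
    (x : E r s t) : Prop :=
  ∀ n : ℕ, K.iter r s t n x ≠ 0

/-- `x` is `κ̄`-divisible if `x = κ̄ • y` for some `y`. -/
def KappaOp.KappaDivisible {E : ℕ → ℤ → ℤ → Type}
    [∀ r s t, AddCommGroup (E r s t)]
    {SS : SpectralSequence E} (K : KappaOp SS) (r : ℕ) (s t : ℤ)
    (x : E r s t) : Prop :=
  ∃ (s' t' : ℤ) (h : s' + 4 = s) (h' : t' + 24 = t) (y : E r s' t'),
    cast (congrArg₂ (E r) h h') (K.κ r s' t' y) = x

/-- The standing hypotheses (satisfied by the `E₂`-term of the elliptic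
spectral sequence for `tmf ∧ Y`): every nonzero element of `E₂` of filtration
`≥ 2` is `κ̄`-free, and every element of `E₂` of filtration `≥ 4` is
`κ̄`-divisible. -/
def KappaOp.StandingHypotheses {E : ℕ → ℤ → ℤ → Type}
    [∀ r s t, AddCommGroup (E r s t)]
    {SS : SpectralSequence E} (K : KappaOp SS) : Prop :=
  (∀ (s t : ℤ) (x : E 2 s t), x ≠ 0 → 2 ≤ s → K.KappaFree 2 s t x) ∧
  (∀ (s t : ℤ) (x : E 2 s t), 4 ≤ s → K.KappaDivisible 2 s t x)

section aux
variable {E : ℕ → ℤ → ℤ → Type} [∀ r s t, AddCommGroup (E r s t)]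

theorem ecast_zero {r : ℕ} {s t s' t' : ℤ} (h : s = s') (h' : t = t')
    (p : E r s t = E r s' t') : cast p (0 : E r s t) = 0 := by subst h h'; rfl

theorem ecast_eq_zero {r : ℕ} {s t s' t' : ℤ} (h : s = s') (h' : t = t')
    (p : E r s t = E r s' t') (x : E r s t) : cast p x = 0 ↔ x = 0 := by
  subst h h'; exact Iff.rfl

theorem ecast_sub {r : ℕ} {s t s' t' : ℤ} (h : s = s') (h' : t = t')
    (p : E r s t = E r s' t') (x y : E r s t) :
    cast p (x - y) = cast p x - cast p y := by subst h h'; rfl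

theorem ecast_ecast_ecast {r : ℕ} {s1 t1 s2 t2 s3 t3 s4 t4 : ℤ}
    (h1 : s1 = s2) (g1 : t1 = t2) (h2 : s2 = s3) (g2 : t2 = t3)
    (h3 : s3 = s4) (g3 : t3 = t4)
    (p : E r s1 t1 = E r s2 t2) (q : E r s2 t2 = E r s3 t3)
    (o : E r s3 t3 = E r s4 t4) (m : E r s1 t1 = E r s4 t4)
    (x : E r s1 t1) : cast o (cast q (cast p x)) = cast m x := by
  subst h1 g1 h2 g2 h3 g3; rfl

variable {SS : SpectralSequence E}

theorem d_ecast (r : ℕ) {s t s' t' : ℤ} (h : s = s') (h' : t = t')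
    (p : E r s t = E r s' t')
    (q : E r (s + r) (t + r - 1) = E r (s' + r) (t' + r - 1))
    (x : E r s t) :
    SS.d r s' t' (cast p x) = cast q (SS.d r s t x) := by subst h h'; rfl

theorem kappa_ecast (K : KappaOp SS) (r : ℕ) {s t s' t' : ℤ} (h : s = s') (h' : t = t')
    (p : E r s t = E r s' t')
    (q : E r (s + 4) (t + 24) = E r (s' + 4) (t' + 24))
    (x : E r s t) :
    K.κ r s' t' (cast p x) = cast q (K.κ r s t x) := by subst h h'; rfl

theorem pageMap_congr (r : ℕ) {s t : ℤ} {x y : E r s t} (e : x = y)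
    (hx : SS.d r s t x = 0) (hy : SS.d r s t y = 0) :
    SS.pageMap r s t x hx = SS.pageMap r s t y hy := by subst e; rfl

theorem pageMap_zero (r : ℕ) (s t : ℤ) (h0 : SS.d r s t (0 : E r s t) = 0) :
    SS.pageMap r s t 0 h0 = 0 := by
  have h00 : SS.d r s t ((0 : E r s t) + 0) = 0 := by simpa using h0
  have key := SS.pageMap_add r s t 0 0 h0 h0 h00
  have e : SS.pageMap r s t ((0 : E r s t) + 0) h00 = SS.pageMap r s t 0 h0 :=
    pageMap_congr r (add_zero 0) h00 h0
  rw [e] at key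
  exact left_eq_add.mp key

theorem pageMap_sub (r : ℕ) {s t : ℤ} (x y : E r s t)
    (hx : SS.d r s t x = 0) (hy : SS.d r s t y = 0)
    (hxy : SS.d r s t (x - y) = 0) :
    SS.pageMap r s t (x - y) hxy = SS.pageMap r s t x hx - SS.pageMap r s t y hy := by
  have hsum : SS.d r s t ((x - y) + y) = 0 := by
    rw [sub_add_cancel]; exact hx
  have key := SS.pageMap_add r s t (x - y) y hxy hy hsum
  have e : SS.pageMap r s t ((x - y) + y) hsum = SS.pageMap r s t x hx :=
    pageMap_congr r (sub_add_cancel x y) hsum hx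
  rw [e] at key
  rw [key]; abel

end aux
section aux2
set_option linter.unusedSectionVars false
variable {E : ℕ → ℤ → ℤ → Type} [∀ r s t, AddCommGroup (E r s t)]
variable {SS : SpectralSequence E}

/-- Build `κ̄`-freeness from injectivity of `κ̄` above a filtration bound. -/
theorem kappaFree_of (K : KappaOp SS) (r : ℕ) (c : ℤ)
    (hinj : ∀ (s t : ℤ) (y : E r s t), c ≤ s → y ≠ 0 → K.κ r s t y ≠ 0)
    {s t : ℤ} (x : E r s t) (hs : c ≤ s) (hx : x ≠ 0) :
    K.KappaFree r s t x := by
  intro n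
  induction n with
  | zero =>
    show cast _ x ≠ 0
    exact fun h => hx ((ecast_eq_zero (by push_cast; ring) (by push_cast; ring) _ _).mp h)
  | succ n ih =>
    show cast _ (K.κ r (s + 4 * n) (t + 24 * n) (K.iter r s t n x)) ≠ 0
    intro h
    have h2 : K.κ r (s + 4 * n) (t + 24 * n) (K.iter r s t n x) = 0 :=
      (ecast_eq_zero (by push_cast; ring) (by push_cast; ring) _ _).mp h
    exact hinj _ _ _ (by have : (0:ℤ) ≤ (n:ℤ) := Int.natCast_nonneg n; linarith) ih h2

/-- From `κ̄`-freeness, `κ̄ x ≠ 0`. -/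
theorem kappaFree_kappa_ne (K : KappaOp SS) (r : ℕ) {s t : ℤ} {x : E r s t}
    (hf : K.KappaFree r s t x) : K.κ r s t x ≠ 0 := by
  intro h
  apply hf 1
  show cast _ (K.κ r (s + 4 * ((0:ℕ):ℤ)) (t + 24 * ((0:ℕ):ℤ)) (K.iter r s t 0 x)) = 0
  rw [ecast_eq_zero (by push_cast; ring) (by push_cast; ring)]
  show K.κ r (s + 4 * ((0:ℕ):ℤ)) (t + 24 * ((0:ℕ):ℤ)) (cast _ x) = 0
  rw [kappa_ecast K r (by push_cast; ring) (by push_cast; ring) _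
    (congrArg₂ (E r) (by push_cast; ring) (by push_cast; ring)), h,
    ecast_zero (by push_cast; ring) (by push_cast; ring)]

end aux2
section aux3
set_option linter.unusedSectionVars false
variable {E : ℕ → ℤ → ℤ → Type} [∀ r s t, AddCommGroup (E r s t)]
variable {SS : SpectralSequence E}

/-- The standing hypotheses on page `r` (with the freeness bound at
filtration `r`), together with vanishing in negative filtrations. -/
def PageHyp (K : KappaOp SS) (r : ℕ) : Prop :=
  (∀ s t : ℤ, s < 0 → ∀ x : E r s t, x = 0) ∧
  (∀ (s t : ℤ) (x : E r s t), 4 ≤ s → K.KappaDivisible r s t x) ∧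
  (∀ (s t : ℤ) (x : E r s t), x ≠ 0 → (r : ℤ) ≤ s → K.KappaFree r s t x)

theorem pageHyp_step (K : KappaOp SS) (r : ℕ) (hr : PageHyp K r) :
    PageHyp K (r + 1) := by
  obtain ⟨hA, hB, hC⟩ := hr
  refine ⟨?_, ?_, ?_⟩
  · -- vanishing in negative filtrations
    intro s t hs x
    obtain ⟨x', hx', hpm⟩ := SS.pageMap_surjective r s t x
    rw [← hpm, pageMap_congr r (hA s t hs x') hx' (by simpa using map_zero (SS.d r s t)),
      pageMap_zero]
  · -- divisibility
    intro s t x hs4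
    obtain ⟨x', hx', hpm⟩ := SS.pageMap_surjective r s t x
    obtain ⟨s', t', h, h', y, hy⟩ := hB s t x' hs4
    subst h h'
    have hy' : K.κ r s' t' y = x' := hy
    have hdky : SS.d r (s' + 4) (t' + 24) (K.κ r s' t' y) = 0 := by rw [hy']; exact hx'
    have hdy : SS.d r s' t' y = 0 := by
      by_contra hne
      have hfree := hC (s' + r) (t' + r - 1) (SS.d r s' t' y) hne
        (by omega)
      refine kappaFree_kappa_ne K r hfree ?_
      have hcd := K.comm_d r s' t' y
      rw [hdky] at hcd
      exact (ecast_eq_zero (by ring) (by ring) _ _).mp hcd.symm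
    refine ⟨s', t', rfl, rfl, SS.pageMap r s' t' y hdy, ?_⟩
    show K.κ (r + 1) s' t' (SS.pageMap r s' t' y hdy) = x
    rw [K.comm_pageMap r s' t' y hdy hdky, pageMap_congr r hy' hdky hx']
    exact hpm
  · -- freeness
    intro s t x hx hs
    have hs' : (r : ℤ) + 1 ≤ s := by push_cast at hs; omega
    -- it suffices to show κ̄ is injective on nonzero elements of filtration ≥ r+1
    refine kappaFree_of K (r + 1) ((r : ℤ) + 1) ?_ x hs' hx
    clear hx hs hs' x s t
    intro s t y hs hy hky
    obtain ⟨x', hx', hpm⟩ := SS.pageMap_surjective r s t y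
    have hdkx' : SS.d r (s + 4) (t + 24) (K.κ r s t x') = 0 := by
      rw [K.comm_d r s t x', hx', map_zero, ecast_zero (by ring) (by ring)]
    have hpmk : SS.pageMap r (s + 4) (t + 24) (K.κ r s t x') hdkx' = 0 := by
      rw [← K.comm_pageMap r s t x' hx' hdkx', hpm, hky]
    rw [SS.pageMap_eq_zero_iff] at hpmk
    obtain ⟨s', t', h, h', w, hw⟩ := hpmk
    have hs4 : 4 ≤ s' := by omega
    obtain ⟨s'', t'', h2, h2', v, hv⟩ := hB s' t' w hs4
    -- u is d v transported to bidegree (s, t)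
    set u : E r s t :=
      cast (congrArg₂ (E r) (by omega) (by omega)) (SS.d r s'' t'' v) with hu
    -- κ x' = κ u
    have e1 : K.κ r s t u =
        cast (congrArg₂ (E r) (by omega : s'' + (r:ℤ) + 4 = s + 4)
          (by omega : t'' + (r:ℤ) - 1 + 24 = t + 24))
          (K.κ r (s'' + r) (t'' + r - 1) (SS.d r s'' t'' v)) := by
      rw [hu, kappa_ecast K r (by omega) (by omega)]
    have e2 : K.κ r s t x' =
        cast (congrArg₂ (E r) (by omega : s'' + (r:ℤ) + 4 = s + 4)
          (by omega : t'' + (r:ℤ) - 1 + 24 = t + 24))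
          (K.κ r (s'' + r) (t'' + r - 1) (SS.d r s'' t'' v)) := by
      rw [← hw, ← hv,
        d_ecast r h2 h2' _ (congrArg₂ (E r) (by omega) (by omega)),
        K.comm_d r s'' t'' v,
        ecast_ecast_ecast (by omega) (by omega) (by omega) (by omega)
          (by omega) (by omega) _ _ _
          (congrArg₂ (E r) (by omega) (by omega))]
    have hsub : K.κ r s t (x' - u) = 0 := by
      rw [map_sub, e1, e2, sub_self]
    have hxu : x' = u := by
      by_contra hne
      have : x' - u ≠ 0 := sub_ne_zero.mpr hne
      exact kappaFree_kappa_ne K r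
        (hC s t (x' - u) this (by omega)) hsub
    -- so x' is a boundary and y = 0, contradiction
    apply hy
    rw [← hpm, SS.pageMap_eq_zero_iff]
    exact ⟨s'', t'', by omega, by omega, v, hxu.symm⟩

end aux3

/-- For a spectral sequence with a `κ̄`-operator of bidegree `(4,24)`
satisfying the standing hypotheses, with `E₂` vanishing in negative
filtrations, and such that `κ̄ ^ 6` annihilates the `E₂₄`-page: the
`E₂₄`-page vanishes in filtrations `s ≥ 24`, all differentials `d_r` for
`r ≥ 24` vanish, and the spectral sequence degenerates at `E₂₄` (for every
`r ≥ 24` the map induced by `pageMap` from the `d_r`-cycles of `E_r` to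
`E_{r+1}` is a bijection, so `E_r ≅ E₂₄` for all `r ≥ 24`). -/
theorem vanishing_line_and_degeneration {E : ℕ → ℤ → ℤ → Type}
    [∀ r s t, AddCommGroup (E r s t)]
    {SS : SpectralSequence E} (K : KappaOp SS)
    (hyp : K.StandingHypotheses)
    (hneg : ∀ s t : ℤ, s < 0 → ∀ x : E 2 s t, x = 0)
    (hkappa6 : ∀ (s t : ℤ) (x : E 24 s t), K.iter 24 s t 6 x = 0) :
    (∀ s t : ℤ, 24 ≤ s → ∀ x : E 24 s t, x = 0) ∧
    (∀ r : ℕ, 24 ≤ r → ∀ (s t : ℤ) (x : E r s t), SS.d r s t x = 0) ∧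
    (∀ r : ℕ, 24 ≤ r → ∀ s t : ℤ,
      Function.Bijective fun x : {x : E r s t // SS.d r s t x = 0} =>
        SS.pageMap r s t x.1 x.2) := by
  -- the standing hypotheses propagate through the pages
  have h2 : PageHyp K 2 :=
    ⟨hneg, fun s t x hs => hyp.2 s t x hs,
      fun s t x hx hs => hyp.1 s t x hx (by exact_mod_cast hs)⟩
  have hall : ∀ n : ℕ, PageHyp K (n + 2) := by
    intro n
    induction n with
    | zero => exact h2
    | succ n ih => exact pageHyp_step K (n + 2) ih
  have h24 : PageHyp K 24 := hall 22
  -- Part 1: vanishing of E₂₄ in filtrations ≥ 24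
  have part1 : ∀ s t : ℤ, 24 ≤ s → ∀ x : E 24 s t, x = 0 := by
    intro s t hs x
    by_contra hx
    exact (h24.2.2 s t x hx (by exact_mod_cast hs)) 6 (hkappa6 s t x)
  -- vanishing on all pages r ≥ 24 (in filtrations ≥ 24 or < 0)
  have hvan : ∀ r : ℕ, 24 ≤ r → ∀ s t : ℤ, (24 ≤ s ∨ s < 0) →
      ∀ x : E r s t, x = 0 := by
    intro r hr
    induction r, hr using Nat.le_induction with
    | base =>
      intro s t hs x
      rcases hs with hs | hs
      · exact part1 s t hs x
      · exact h24.1 s t hs x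
    | succ r hr ih =>
      intro s t hs x
      obtain ⟨x', hx', hpm⟩ := SS.pageMap_surjective r s t x
      rw [← hpm, pageMap_congr r (ih s t hs x') hx'
        (by simpa using map_zero (SS.d r s t)), pageMap_zero]
  -- Part 2: all differentials on pages r ≥ 24 vanish
  have part2 : ∀ r : ℕ, 24 ≤ r → ∀ (s t : ℤ) (x : E r s t),
      SS.d r s t x = 0 := by
    intro r hr s t x
    rcases lt_or_ge s 0 with hs | hs
    · rw [hvan r hr s t (Or.inr hs) x, map_zero]
    · exact hvan r hr (s + r) (t + r - 1) (Or.inl (by omega)) (SS.d r s t x)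
  refine ⟨part1, part2, ?_⟩
  -- Part 3: degeneration
  intro r hr s t
  constructor
  · -- injective
    rintro ⟨a, ha⟩ ⟨b, hb⟩ hab
    simp only at hab
    have hds : SS.d r s t (a - b) = 0 := by rw [map_sub, ha, hb, sub_zero]
    have : SS.pageMap r s t (a - b) hds = 0 := by
      rw [pageMap_sub r a b ha hb hds, hab, sub_self]
    rw [SS.pageMap_eq_zero_iff] at this
    obtain ⟨s', t', h, h', w, hw⟩ := this
    have hzero : a - b = 0 := by
      rw [← hw, part2 r (by omega) s' t' w, ecast_zero h h']
    exact Subtype.ext (by rwa [sub_eq_zero] at hzero)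
  · -- surjective
    intro y
    obtain ⟨x, hx, hpm⟩ := SS.pageMap_surjective r s t y
    exact ⟨⟨x, hx⟩, hpm⟩
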